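/- Suppose C = E[∇f(U) ⊗ ∇f(U)] with E‖∇f(U)‖² < ∞, the law of U has full support on H (or the gradient condition holds everywhere), and the trailing eigenvalues satisfy λ_{n+1} = λ_{n+2} = ⋯ = 0, where A_n = span{w₁,…,w_n} is the span of the leading n eigenfunctions. If ∇f(u) ∈ A_n for all u ∈ H, then for any u₁, u₂ ∈ H with P_{A_n} u₁ = P_{A_n} u₂ we have f(u₁) = f(u₂), where P_{A_n} is the orthogonal projector onto A_n. -/

import Mathlib

open RealInnerProductSpace

/-- Level-set invariance: if the gradient of `f` always lies in the
(finite-dimensional) active subspace `A`, then `f` is constant on fibers of the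
orthogonal projection onto `A`. -/
theorem stmt4 {H : Type*} [NormedAddCommGroup H] [InnerProductSpace ℝ H]
    [CompleteSpace H] [TopologicalSpace.SeparableSpace H]
    (f : H → ℝ) (hf : ContDiff ℝ 1 f)
    (A : Submodule ℝ H) [FiniteDimensional ℝ A]
    (hgrad : ∀ u : H, gradient f u ∈ A)
    (u₁ u₂ : H) (hP : A.orthogonalProjection u₁ = A.orthogonalProjection u₂) :
    f u₁ = f u₂ := by
  set v : H := u₁ - u₂ with hv
  have hvmem : v ∈ Aᗮ := by
    have h1 := Submodule.sub_starProjection_mem_orthogonal (K := A) u₁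
    have h2 := Submodule.sub_starProjection_mem_orthogonal (K := A) u₂
    have : v = (u₁ - A.orthogonalProjection u₁) - (u₂ - A.orthogonalProjection u₂) := by
      rw [hP, hv]; abel_nf
    rw [this]
    exact Submodule.sub_mem _ h1 h2
  have hdiff : Differentiable ℝ f := hf.differentiable one_ne_zero
  -- derivative of g t = f (u₂ + t • v) is 0
  have key : ∀ t : ℝ, HasDerivAt (fun t : ℝ => f (u₂ + t • v)) 0 t := by
    intro t
    have hline : HasDerivAt (fun t : ℝ => u₂ + t • v) v t := by
      simpa using ((hasDerivAt_id t).smul_const v).const_add u₂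
    have hfd : HasFDerivAt f (fderiv ℝ f (u₂ + t • v)) (u₂ + t • v) :=
      (hdiff (u₂ + t • v)).hasFDerivAt
    have := hfd.comp_hasDerivAt t hline
    have hval : fderiv ℝ f (u₂ + t • v) v = 0 := by
      have : fderiv ℝ f (u₂ + t • v) v = ⟪gradient f (u₂ + t • v), v⟫ := by
        rw [gradient]
        simp [InnerProductSpace.toDual_symm_apply]
      rw [this]
      exact (Submodule.mem_orthogonal A v).mp hvmem _ (hgrad _)
    rwa [hval] at this
  have hconst : (fun t : ℝ => f (u₂ + t • v)) 1 = (fun t : ℝ => f (u₂ + t • v)) 0 :=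
    is_const_of_deriv_eq_zero (fun t => (key t).differentiableAt)
      (fun t => (key t).deriv) 1 0
  simpa [hv] using hconst
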